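/- If a graph G has a dominating induced matching and H is a homogeneous set in G containing at least one edge, then N(H) is a stable (independent) set. -/
import Mathlib


/-- `M` is an induced matching of `G` that dominates every edge:
edges of `M` are edges of `G`, pairwise at distance at least two,
and every edge of `G` shares an endpoint with some edge of `M`. -/
def IsDIM {V : Type*} (G : SimpleGraph V) (M : Set (Sym2 V)) : Prop :=
  M ⊆ G.edgeSet ∧
  (∀ e ∈ M, ∀ f ∈ M, e ≠ f → ∀ u ∈ e, ∀ v ∈ f, u ≠ v ∧ ¬ G.Adj u v) ∧
  (∀ e ∈ G.edgeSet, ∃ f ∈ M, ∃ u, u ∈ e ∧ u ∈ f)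

/-- `H` is a homogeneous set of `G`: a proper vertex subset with at least two
elements such that every outside vertex sees all of `H` or none of `H`. -/
def IsHomogeneous {V : Type*} (G : SimpleGraph V) (H : Set V) : Prop :=
  2 ≤ H.ncard ∧ H ≠ Set.univ ∧
  ∀ v ∉ H, (∀ h ∈ H, G.Adj v h) ∨ (∀ h ∈ H, ¬ G.Adj v h)

/-- The outside neighborhood of a vertex set `H`. -/
def homNbhd {V : Type*} (G : SimpleGraph V) (H : Set V) : Set V :=
  {v | v ∉ H ∧ ∃ h ∈ H, G.Adj v h}

private lemma dim_key2 {V : Type*} (G : SimpleGraph V) (M : Set (Sym2 V))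
    (hM : IsDIM G M) (c d w w' : V) (f : Sym2 V) (hf : f ∈ M)
    (hcf : c ∈ f) (hwf : w ∈ f) (hcw : c ≠ w)
    (hcd : G.Adj c d) (hww' : G.Adj w w') (hdw' : G.Adj d w')
    (hdc : d ≠ c) (hdw : d ≠ w) (hw'c : w' ≠ c) (hw'w : w' ≠ w) : False := by
  obtain ⟨hMsub, hMind, hMdom⟩ := hM
  have hfeq : f = s(c, w) := ((Sym2.mem_and_mem_iff hcw).mp ⟨hcf, hwf⟩)
  obtain ⟨g, hg, u, hu, hug⟩ := hMdom s(d, w') hdw'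
  have hgf : g = f := by
    by_contra hne
    rcases Sym2.mem_iff.mp hu with rfl | rfl
    · exact (hMind g hg f hf hne u hug c hcf).2 hcd.symm
    · exact (hMind g hg f hf hne u hug w hwf).2 hww'.symm
  rw [hgf, hfeq] at hug
  rcases Sym2.mem_iff.mp hu with rfl | rfl <;>
    rcases Sym2.mem_iff.mp hug with rfl | rfl
  · exact hdc rfl
  · exact hdw rfl
  · exact hw'c rfl
  · exact hw'w rfl

private lemma dim_key {V : Type*} (G : SimpleGraph V) (M : Set (Sym2 V))
    (hM : IsDIM G M) (c d x y : V) (f : Sym2 V) (hf : f ∈ M) (hcf : c ∈ f)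
    (hcd : G.Adj c d) (hxy : G.Adj x y)
    (hcx : G.Adj c x) (hcy : G.Adj c y) (hdx : G.Adj d x) (hdy : G.Adj d y)
    (hdc : d ≠ c) (hdxne : d ≠ x) (hdyne : d ≠ y)
    (hxc : x ≠ c) (hyc : y ≠ c) : False := by
  obtain ⟨hMsub, hMind, hMdom⟩ := hM
  obtain ⟨e, he, u, hu, hue⟩ := hMdom s(x, y) hxy
  have hef : e = f := by
    by_contra hne
    rcases Sym2.mem_iff.mp hu with rfl | rfl
    · exact (hMind e he f hf hne u hue c hcf).2 hcx.symm
    · exact (hMind e he f hf hne u hue c hcf).2 hcy.symm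
  rw [hef] at hue
  rcases Sym2.mem_iff.mp hu with rfl | rfl
  · exact dim_key2 G M ⟨hMsub, hMind, hMdom⟩ c d u y f hf hcf hue hxc.symm
      hcd hxy hdy hdc hdxne hyc hxy.ne'
  · exact dim_key2 G M ⟨hMsub, hMind, hMdom⟩ c d u x f hf hcf hue hyc.symm
      hcd hxy.symm hdx hdc hdyne hxc hxy.ne

/-- In a connected graph with a dominating induced matching, the neighborhood of a
homogeneous set containing an edge is stable. -/
theorem dim_hom_edge_nbhd_stable {V : Type*} [Fintype V] (G : SimpleGraph V)
    (hconn : G.Connected) (h : ∃ M, IsDIM G M) (H : Set V)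
    (hH : IsHomogeneous G H) (hedge : ∃ a ∈ H, ∃ b ∈ H, G.Adj a b) :
    ∀ a ∈ homNbhd G H, ∀ b ∈ homNbhd G H, ¬ G.Adj a b := by
  obtain ⟨M, hM⟩ := h
  obtain ⟨x, hx, y, hy, hxy⟩ := hedge
  intro a ha b hb hab
  have hsees : ∀ v, v ∈ homNbhd G H → ∀ h ∈ H, G.Adj v h := by
    intro v hv h hh
    rcases hH.2.2 v hv.1 with h1 | h1
    · exact h1 h hh
    · obtain ⟨h0, hh0, hadj⟩ := hv.2
      exact absurd hadj (h1 h0 hh0)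
  have hax := hsees a ha x hx
  have hay := hsees a ha y hy
  have hbx := hsees b hb x hx
  have hby := hsees b hb y hy
  have haH : a ∉ H := ha.1
  have hbH : b ∉ H := hb.1
  obtain ⟨f, hf, u, hu, huf⟩ := hM.2.2 s(a, b) hab
  rcases Sym2.mem_iff.mp hu with rfl | rfl
  · exact dim_key G M hM u b x y f hf huf hab hxy hax hay hbx hby hab.ne'
      (fun h => hbH (h ▸ hx)) (fun h => hbH (h ▸ hy))
      (fun h => haH (h ▸ hx)) (fun h => haH (h ▸ hy))
  · exact dim_key G M hM u a x y f hf huf hab.symm hxy hbx hby hax hay hab.ne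
      (fun h => haH (h ▸ hx)) (fun h => haH (h ▸ hy))
      (fun h => hbH (h ▸ hx)) (fun h => hbH (h ▸ hy))
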